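/- The symplectic q-ary graph ℰ in F_q^v (v even, edges the totally isotropic 2-subspaces of a nondegenerate symplectic form) is a strongly regular q-ary graph with parameters (v, v−2, [v−2]_q − 2, [v−2]_q; q): any two adjacent 1-subspaces x ≠ y satisfy |(N(x)∩N(y))∖{x,y}| = (q^{v−2}−1)/(q−1) − 2, and any two non-adjacent 1-subspaces satisfy |(N(x)∩N(y))∖{x,y}| = (q^{v−2}−1)/(q−1). -/

import Mathlib

open Module

section Aux

variable {F V : Type*} [Field F] [Fintype F] [AddCommGroup V] [Module F V]
  [FiniteDimensional F V]

/-- Counting the 1-dimensional subspaces contained in a subspace `W`. -/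
lemma aux_card_one_dim (W : Submodule F V) :
    Nat.card {z : Submodule F V // finrank F z = 1 ∧ z ≤ W} =
      (Fintype.card F ^ finrank F W - 1) / (Fintype.card F - 1) := by
  classical
  haveI : Finite V := Module.finite_of_finite F
  haveI : Fintype V := Fintype.ofFinite V
  haveI : Finite (Submodule F V) :=
    Finite.of_injective (fun z : Submodule F V => (z : Set V)) SetLike.coe_injective
  haveI : Fintype (Submodule F V) := Fintype.ofFinite _
  set q := Fintype.card F with hq
  have hq2 : 2 ≤ q := Fintype.one_lt_card
  set A : Finset V := (W : Set V).toFinset.erase 0 with hA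
  have hAmem : ∀ v : V, v ∈ A ↔ v ≠ 0 ∧ v ∈ W := by
    intro v; simp [hA, Finset.mem_erase, Set.mem_toFinset]
  set B : Finset (Submodule F V) :=
    Finset.univ.filter (fun z : Submodule F V => finrank F z = 1 ∧ z ≤ W) with hB
  have hBmem : ∀ z : Submodule F V, z ∈ B ↔ finrank F z = 1 ∧ z ≤ W := by
    intro z; simp [hB]
  have key : A.card = ∑ z ∈ B, (A.filter (fun v => Submodule.span F {v} = z)).card := by
    apply Finset.card_eq_sum_card_fiberwise
    intro v hv
    rw [Finset.mem_coe, hAmem] at hv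
    rw [Finset.mem_coe, hBmem]
    exact ⟨finrank_span_singleton hv.1,
      (Submodule.span_singleton_le_iff_mem v W).mpr hv.2⟩
  have hfiber : ∀ z ∈ B, (A.filter (fun v => Submodule.span F {v} = z)).card = q - 1 := by
    intro z hz
    rw [hBmem] at hz
    have hfe : A.filter (fun v => Submodule.span F {v} = z)
        = (z : Set V).toFinset.erase 0 := by
      ext v
      simp only [Finset.mem_filter, Finset.mem_erase, Set.mem_toFinset, hAmem]
      constructor
      · rintro ⟨⟨hv0, _⟩, hsp⟩
        exact ⟨hv0, by rw [← hsp]; exact Submodule.mem_span_singleton_self v⟩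
      · rintro ⟨hv0, hvz⟩
        have hle : Submodule.span F {v} ≤ z :=
          (Submodule.span_singleton_le_iff_mem v z).mpr hvz
        have : Submodule.span F {v} = z := by
          apply Submodule.eq_of_le_of_finrank_le hle
          rw [hz.1, finrank_span_singleton hv0]
        exact ⟨⟨hv0, hz.2 hvz⟩, this⟩
    rw [hfe, Finset.card_erase_of_mem (by simp [Set.mem_toFinset]), Set.toFinset_card]
    have : Fintype.card (z : Set V) = q ^ finrank F z := card_eq_pow_finrank
    rw [this, hz.1, pow_one]
  have hsum : A.card = B.card * (q - 1) := by
    rw [key, Finset.sum_congr rfl hfiber, Finset.sum_const, smul_eq_mul]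
  have hAcard : A.card = q ^ finrank F W - 1 := by
    rw [hA, Finset.card_erase_of_mem (by simp [Set.mem_toFinset]), Set.toFinset_card]
    have : Fintype.card (W : Set V) = q ^ finrank F W := card_eq_pow_finrank
    rw [this]
  have hNB : Nat.card {z : Submodule F V // finrank F z = 1 ∧ z ≤ W} = B.card := by
    rw [Nat.card_eq_fintype_card, Fintype.card_subtype]
  rw [hNB]
  symm
  apply Nat.div_eq_of_eq_mul_left (by omega)
  rw [← hAcard, hsum]

variable (b : LinearMap.BilinForm F V)

lemma aux_vanish_one_dim (halt : b.IsAlt) {p : Submodule F V} (hp : finrank F p = 1) :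
    ∀ u ∈ p, ∀ w ∈ p, b u w = 0 := by
  intro u hu w hw
  rcases eq_or_ne u 0 with rfl | hu0
  · simp
  · have hsp : Submodule.span F {u} = p := by
      apply Submodule.eq_of_le_of_finrank_le ((Submodule.span_singleton_le_iff_mem u p).mpr hu)
      rw [hp, finrank_span_singleton hu0]
    rw [← hsp] at hw
    obtain ⟨c, rfl⟩ := Submodule.mem_span_singleton.mp hw
    rw [map_smul, smul_eq_mul, halt u, mul_zero]

lemma aux_sup_rank {x z : Submodule F V} (hx : finrank F x = 1) (hz : finrank F z = 1)
    (hxz : x ≠ z) : finrank F (x ⊔ z : Submodule F V) = 2 := by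
  have hinf : finrank F (x ⊓ z : Submodule F V) = 0 := by
    by_contra h
    have h1 : 1 ≤ finrank F (x ⊓ z : Submodule F V) := Nat.one_le_iff_ne_zero.mpr h
    have hex : x ⊓ z = x := Submodule.eq_of_le_of_finrank_le inf_le_left (by omega)
    have hez : x ⊓ z = z := Submodule.eq_of_le_of_finrank_le inf_le_right (by omega)
    exact hxz (hex.symm.trans hez)
  have := Submodule.finrank_sup_add_finrank_inf_eq x z
  omega

lemma aux_adj (halt : b.IsAlt) {x z : Submodule F V} (hx : finrank F x = 1)
    (hz : finrank F z = 1) (hxz : x ≠ z) :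
    (finrank F ↥(x ⊔ z) = 2 ∧ ∀ u ∈ x ⊔ z, ∀ w ∈ x ⊔ z, b u w = 0)
      ↔ z ≤ b.orthogonal x := by
  constructor
  · rintro ⟨-, h⟩ m hm
    rw [LinearMap.BilinForm.mem_orthogonal_iff]
    intro n hn
    exact h n (Submodule.mem_sup_left hn) m (Submodule.mem_sup_right hm)
  · intro hzx
    refine ⟨aux_sup_rank hx hz hxz, ?_⟩
    intro u hu w hw
    obtain ⟨a, ha, c, hc, rfl⟩ := Submodule.mem_sup.mp hu
    obtain ⟨a', ha', c', hc', rfl⟩ := Submodule.mem_sup.mp hw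
    have e1 : b a a' = 0 := aux_vanish_one_dim b halt hx a ha a' ha'
    have e4 : b c c' = 0 := aux_vanish_one_dim b halt hz c hc c' hc'
    have e2 : b a c' = 0 := (hzx hc') a ha
    have e3 : b c a' = 0 := halt.isRefl a' c ((hzx hc) a' ha')
    simp [map_add, LinearMap.add_apply, e1, e2, e3, e4]

lemma aux_orth_sup (x y : Submodule F V) :
    b.orthogonal (x ⊔ y) = b.orthogonal x ⊓ b.orthogonal y := by
  ext m
  simp only [LinearMap.BilinForm.mem_orthogonal_iff, Submodule.mem_inf]
  constructor
  · intro h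
    exact ⟨fun n hn => h n (Submodule.mem_sup_left hn),
      fun n hn => h n (Submodule.mem_sup_right hn)⟩
  · rintro ⟨h1, h2⟩ n hn
    obtain ⟨a, ha, c, hc, rfl⟩ := Submodule.mem_sup.mp hn
    have : b a m = 0 := h1 a ha
    have : b c m = 0 := h2 c hc
    simp only [LinearMap.BilinForm.IsOrtho, map_add, LinearMap.add_apply]
    rw [h1 a ha, h2 c hc, add_zero]

lemma aux_le_orth_symm (hr : b.IsRefl) {x y : Submodule F V}
    (h : x ≤ b.orthogonal y) : y ≤ b.orthogonal x := by
  intro m hm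
  rw [LinearMap.BilinForm.mem_orthogonal_iff]
  intro n hn
  exact hr m n ((h hn) m hm)

end Aux
theorem stmt14 {F V : Type*} [Field F] [Fintype F] [AddCommGroup V] [Module F V]
    [FiniteDimensional F V]
    (b : LinearMap.BilinForm F V) (hb : b.Nondegenerate) (halt : b.IsAlt)
    (hv : Even (finrank F V))
    (E : Set (Submodule F V))
    (hE : E = {e : Submodule F V | finrank F ↥e = 2 ∧ ∀ u ∈ e, ∀ w ∈ e, b u w = 0}) :
    ∀ x y : Submodule F V, finrank F ↥x = 1 → finrank F ↥y = 1 → x ≠ y →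
      (x ⊔ y ∈ E →
        Nat.card {z : Submodule F V // finrank F ↥z = 1 ∧ z ≠ x ∧ z ≠ y ∧
            (z = x ∨ x ⊔ z ∈ E) ∧ (z = y ∨ y ⊔ z ∈ E)} =
          (Fintype.card F ^ (finrank F V - 2) - 1) / (Fintype.card F - 1) - 2) ∧
      (x ⊔ y ∉ E →
        Nat.card {z : Submodule F V // finrank F ↥z = 1 ∧ z ≠ x ∧ z ≠ y ∧
            (z = x ∨ x ⊔ z ∈ E) ∧ (z = y ∨ y ⊔ z ∈ E)} =
          (Fintype.card F ^ (finrank F V - 2) - 1) / (Fintype.card F - 1)) := by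
  classical
  intro x y hx hy hxy
  have hr : b.IsRefl := halt.isRefl
  haveI : Finite V := Module.finite_of_finite F
  haveI : Finite (Submodule F V) :=
    Finite.of_injective (fun z : Submodule F V => (z : Set V)) SetLike.coe_injective
  have hEiff : ∀ (p z : Submodule F V), finrank F p = 1 → finrank F z = 1 → p ≠ z →
      (p ⊔ z ∈ E ↔ z ≤ b.orthogonal p) := by
    intro p z hp hz hpz
    rw [hE, Set.mem_setOf_eq]
    exact aux_adj b halt hp hz hpz
  set W := b.orthogonal (x ⊔ y) with hW
  have hWrank : finrank F W = finrank F V - 2 := by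
    rw [hW, LinearMap.BilinForm.finrank_orthogonal hb, aux_sup_rank hx hy hxy]
  have hzW : ∀ z : Submodule F V, z ≤ W ↔ z ≤ b.orthogonal x ∧ z ≤ b.orthogonal y := by
    intro z; rw [hW, aux_orth_sup, le_inf_iff]
  set T : Set (Submodule F V) := {z | finrank F ↥z = 1 ∧ z ≤ W} with hT
  have hcond : ∀ z : Submodule F V,
      (finrank F ↥z = 1 ∧ z ≠ x ∧ z ≠ y ∧
        (z = x ∨ x ⊔ z ∈ E) ∧ (z = y ∨ y ⊔ z ∈ E)) ↔ z ∈ T \ {x, y} := by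
    intro z
    simp only [hT, Set.mem_diff, Set.mem_setOf_eq, Set.mem_insert_iff,
      Set.mem_singleton_iff, not_or]
    constructor
    · rintro ⟨h1, h2, h3, h4, h5⟩
      have hox : z ≤ b.orthogonal x :=
        (hEiff x z hx h1 (fun h => h2 h.symm)).mp (h4.resolve_left h2)
      have hoy : z ≤ b.orthogonal y :=
        (hEiff y z hy h1 (fun h => h3 h.symm)).mp (h5.resolve_left h3)
      exact ⟨⟨h1, (hzW z).mpr ⟨hox, hoy⟩⟩, h2, h3⟩
    · rintro ⟨⟨h1, hle⟩, h2, h3⟩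
      obtain ⟨hox, hoy⟩ := (hzW z).mp hle
      exact ⟨h1, h2, h3, Or.inr ((hEiff x z hx h1 (fun h => h2 h.symm)).mpr hox),
        Or.inr ((hEiff y z hy h1 (fun h => h3 h.symm)).mpr hoy)⟩
  have hcard : Nat.card {z : Submodule F V // finrank F ↥z = 1 ∧ z ≠ x ∧ z ≠ y ∧
      (z = x ∨ x ⊔ z ∈ E) ∧ (z = y ∨ y ⊔ z ∈ E)} = (T \ {x, y}).ncard := by
    rw [Nat.card_congr (Equiv.subtypeEquivRight hcond)]
    exact Nat.card_coe_set_eq _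
  have hTcard : T.ncard =
      (Fintype.card F ^ (finrank F V - 2) - 1) / (Fintype.card F - 1) := by
    rw [← Nat.card_coe_set_eq, ← hWrank]
    exact aux_card_one_dim W
  constructor
  · intro hadj
    have hyox : y ≤ b.orthogonal x := (hEiff x y hx hy hxy).mp hadj
    have hxoy : x ≤ b.orthogonal y := aux_le_orth_symm b hr hyox
    have hxox : x ≤ b.orthogonal x := fun m hm =>
      LinearMap.BilinForm.mem_orthogonal_iff.mpr
        (fun n hn => aux_vanish_one_dim b halt hx n hn m hm)
    have hyoy : y ≤ b.orthogonal y := fun m hm =>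
      LinearMap.BilinForm.mem_orthogonal_iff.mpr
        (fun n hn => aux_vanish_one_dim b halt hy n hn m hm)
    have hxT : x ∈ T := ⟨hx, (hzW x).mpr ⟨hxox, hxoy⟩⟩
    have hyT : y ∈ T := ⟨hy, (hzW y).mpr ⟨aux_le_orth_symm b hr hxoy, hyoy⟩⟩
    rw [hcard, Set.ncard_diff (by simp [Set.insert_subset_iff, hxT, hyT]) (Set.toFinite _),
      Set.ncard_pair hxy, hTcard]
  · intro hnadj
    have hnyox : ¬ y ≤ b.orthogonal x := fun h => hnadj ((hEiff x y hx hy hxy).mpr h)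
    have hxT : x ∉ T := by
      rintro ⟨-, hle⟩
      exact hnyox (aux_le_orth_symm b hr ((hzW x).mp hle).2)
    have hyT : y ∉ T := by
      rintro ⟨-, hle⟩
      exact hnyox ((hzW y).mp hle).1
    have : T \ {x, y} = T := by
      ext z
      simp only [Set.mem_diff, Set.mem_insert_iff, Set.mem_singleton_iff, not_or,
        and_iff_left_iff_imp]
      rintro hz
      exact ⟨fun h => hxT (h ▸ hz), fun h => hyT (h ▸ hz)⟩
    rw [hcard, this, hTcard]
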